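/- arXiv:1104.4241 — 5 statements merged into one kernel-verified Lean document; each statement's English description precedes it below -/
import Mathlib

section
/- For every probability measure ρ on the interval [-1,1], the expected absolute difference of two independent samples satisfies ∫∫ |x−y| dρ(x) dρ(y) ≤ 1. -/
open MeasureTheory

lemma key_ineq {x y : ℝ} (hx : x ∈ Set.Icc (-1:ℝ) 1) (hy : y ∈ Set.Icc (-1:ℝ) 1) :
    |x - y| ≤ 1 - x * y := by
  obtain ⟨hx1, hx2⟩ := hx
  obtain ⟨hy1, hy2⟩ := hy
  rw [abs_le]
  constructor <;> nlinarith [mul_nonneg (sub_nonneg.2 hx2) (sub_nonneg.2 (neg_le.1 hy1)),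
    mul_nonneg (sub_nonneg.2 hy2) (sub_nonneg.2 (neg_le.1 hx1))]

theorem stmt_0 (ρ : Measure ℝ) [IsProbabilityMeasure ρ]
    (hsupp : ρ (Set.Icc (-1 : ℝ) 1) = 1) :
    ∫ x, ∫ y, |x - y| ∂ρ ∂ρ ≤ 1 := by
  have hae : ∀ᵐ x ∂ρ, x ∈ Set.Icc (-1:ℝ) 1 := by
    rw [ae_iff]
    have : {x : ℝ | ¬ x ∈ Set.Icc (-1:ℝ) 1} = (Set.Icc (-1:ℝ) 1)ᶜ := rfl
    rw [this, prob_compl_eq_zero_iff measurableSet_Icc]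
    exact hsupp
  -- integrability of id
  have hid : Integrable (fun x : ℝ => x) ρ := by
    apply Integrable.mono' (integrable_const (1:ℝ)) measurable_id.aestronglyMeasurable
    filter_upwards [hae] with x hx
    rw [Real.norm_eq_abs, abs_le]; exact ⟨hx.1, hx.2⟩
  set m : ℝ := ∫ x, x ∂ρ with hm
  -- inner integrability
  have hint_abs : ∀ x : ℝ, Integrable (fun y => |x - y|) ρ := by
    intro x
    apply Integrable.mono' (integrable_const (|x| + 1))
      ((continuous_const.sub continuous_id).abs.aestronglyMeasurable)
    filter_upwards [hae] with y hy
    rw [Real.norm_eq_abs, abs_abs]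
    calc |x - y| ≤ |x| + |y| := abs_sub x y
    _ ≤ |x| + 1 := by
        have : |y| ≤ 1 := abs_le.2 ⟨hy.1, hy.2⟩
        linarith
  have hint_g : ∀ x : ℝ, Integrable (fun y => 1 - x * y) ρ :=
    fun x => (integrable_const 1).sub (hid.const_mul x)
  -- inner integral bounds
  have hinner : ∀ x ∈ Set.Icc (-1:ℝ) 1, ∫ y, |x - y| ∂ρ ≤ 1 - x * m := by
    intro x hx
    have h1 : ∫ y, |x - y| ∂ρ ≤ ∫ y, (1 - x * y) ∂ρ := by
      apply integral_mono_ae (hint_abs x) (hint_g x)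
      filter_upwards [hae] with y hy
      exact key_ineq hx hy
    have h2 : ∫ y, (1 - x * y) ∂ρ = 1 - x * m := by
      rw [integral_sub (integrable_const 1) (hid.const_mul x), integral_const,
        integral_const_mul, probReal_univ, smul_eq_mul, one_mul]
    linarith
  -- outer function integrable
  have hmeas : AEStronglyMeasurable (fun x => ∫ y, |x - y| ∂ρ) ρ := by
    have : StronglyMeasurable (Function.uncurry fun x y : ℝ => |x - y|) := by
      apply Continuous.stronglyMeasurable
      exact (continuous_fst.sub continuous_snd).abs
    exact this.integral_prod_right'.aestronglyMeasurable
  have hF : Integrable (fun x => ∫ y, |x - y| ∂ρ) ρ := by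
    apply Integrable.mono' (integrable_const (2:ℝ)) hmeas
    filter_upwards [hae] with x hx
    rw [Real.norm_eq_abs, abs_of_nonneg (integral_nonneg fun y => abs_nonneg _)]
    calc ∫ y, |x - y| ∂ρ ≤ ∫ y, (2:ℝ) ∂ρ := by
          apply integral_mono_ae (hint_abs x) (integrable_const 2)
          filter_upwards [hae] with y hy
          have h1 : |x| ≤ 1 := abs_le.2 ⟨hx.1, hx.2⟩
          have h2 : |y| ≤ 1 := abs_le.2 ⟨hy.1, hy.2⟩
          calc |x - y| ≤ |x| + |y| := abs_sub x y
          _ ≤ 2 := by linarith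
    _ = 2 := by simp
  have houter : ∫ x, ∫ y, |x - y| ∂ρ ∂ρ ≤ ∫ x, (1 - x * m) ∂ρ := by
    apply integral_mono_ae hF ((integrable_const 1).sub (hid.mul_const m))
    filter_upwards [hae] with x hx
    exact hinner x hx
  have hval : ∫ x, (1 - x * m) ∂ρ = 1 - m * m := by
    rw [integral_sub (integrable_const 1) (hid.mul_const m), integral_const,
      integral_mul_const, probReal_univ, smul_eq_mul, one_mul]
  nlinarith [mul_self_nonneg m, houter, hval]
end

section
/- For every probability measure ρ on the interval [−D, D] with D ≥ 0, one has ∫∫ |x−y| dρ(x) dρ(y) ≤ D, and in particular the supremum over all such probability measures of ∫∫ |x−y| dρ(x) dρ(y) equals D. -/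
open MeasureTheory
open scoped ENNReal

lemma my_key_ineq {D x y : ℝ} (hD : 0 < D) (hx : x ∈ Set.Icc (-D) D) (hy : y ∈ Set.Icc (-D) D) :
    |x - y| ≤ D - x / D * y := by
  obtain ⟨hx1, hx2⟩ := hx
  obtain ⟨hy1, hy2⟩ := hy
  have h1 : D * |x - y| ≤ D * D - x * y := by
    rcases abs_cases (x - y) with ⟨h, _⟩ | ⟨h, _⟩ <;> nlinarith
  have h3 : |x - y| ≤ (D * D - x * y) / D := by
    rw [le_div_iff₀ hD]; linarith [h1]
  have h4 : (D * D - x * y) / D = D - x / D * y := by field_simp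
  linarith [h3, h4.le]

lemma my_ae_mem (D : ℝ) (ρ : Measure ℝ) [IsProbabilityMeasure ρ]
    (hsupp : ρ (Set.Icc (-D) D) = 1) : ∀ᵐ x ∂ρ, x ∈ Set.Icc (-D) D := by
  rw [ae_iff]
  have h : ρ (Set.Icc (-D) D)ᶜ = 0 := by
    rw [measure_compl measurableSet_Icc (measure_ne_top ρ _), hsupp, measure_univ]
    simp
  exact h

lemma my_part1 (D : ℝ) (hD : 0 ≤ D) (ρ : Measure ℝ) (hρ : IsProbabilityMeasure ρ)
    (hsupp : ρ (Set.Icc (-D) D) = 1) :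
    ∫ x, ∫ y, |x - y| ∂ρ ∂ρ ≤ D := by
  have hae : ∀ᵐ x ∂ρ, x ∈ Set.Icc (-D) D := my_ae_mem D ρ hsupp
  rcases hD.eq_or_lt with rfl | hDpos
  · have hae0 : ∀ᵐ x ∂ρ, x = (0 : ℝ) := by
      filter_upwards [hae] with x hx
      simpa using hx
    have h0 : ∫ x, ∫ y, |x - y| ∂ρ ∂ρ = ∫ x, (0 : ℝ) ∂ρ := by
      apply integral_congr_ae
      filter_upwards [hae0] with x hx
      rw [hx]
      have : ∫ y, |0 - y| ∂ρ = ∫ y, (0 : ℝ) ∂ρ := by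
        apply integral_congr_ae
        filter_upwards [hae0] with y hy
        rw [hy]; simp
      simpa using this
    rw [h0, integral_zero]
  · have hInt_id : Integrable (fun y : ℝ => y) ρ := by
      apply Integrable.mono' (integrable_const D) measurable_id.aestronglyMeasurable
      filter_upwards [hae] with y hy
      rw [Real.norm_eq_abs, abs_le]; exact ⟨hy.1, hy.2⟩
    set μ := ∫ y, y ∂ρ with hμ
    have hinner : ∀ x ∈ Set.Icc (-D) D, ∫ y, |x - y| ∂ρ ≤ D - x / D * μ := by
      intro x hx
      have hintg : Integrable (fun y : ℝ => D - x / D * y) ρ :=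
        (integrable_const D).sub (hInt_id.const_mul (x / D))
      have hle : ∫ y, |x - y| ∂ρ ≤ ∫ y, (D - x / D * y) ∂ρ := by
        apply integral_mono_of_nonneg (Filter.Eventually.of_forall fun y => abs_nonneg _) hintg
        filter_upwards [hae] with y hy
        exact my_key_ineq hDpos hx hy
      have heq : ∫ y, (D - x / D * y) ∂ρ = D - x / D * μ := by
        rw [integral_sub (integrable_const D) (hInt_id.const_mul (x / D)),
          integral_const, integral_const_mul]
        simp [hμ]
      linarith [hle, heq.le, heq.ge]
    have houter : ∫ x, ∫ y, |x - y| ∂ρ ∂ρ ≤ ∫ x, (D - μ / D * x) ∂ρ := by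
      apply integral_mono_of_nonneg
      · exact Filter.Eventually.of_forall fun x => integral_nonneg fun y => abs_nonneg _
      · exact (integrable_const D).sub (hInt_id.const_mul (μ / D))
      · filter_upwards [hae] with x hx
        have := hinner x hx
        have h5 : x / D * μ = μ / D * x := by ring
        linarith
    have heq2 : ∫ x, (D - μ / D * x) ∂ρ = D - μ / D * μ := by
      rw [integral_sub (integrable_const D) (hInt_id.const_mul (μ / D)),
        integral_const, integral_const_mul]
      simp [hμ]
    have h6 : 0 ≤ μ / D * μ := by
      have : μ / D * μ = μ * μ / D := by ring
      rw [this]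
      exact div_nonneg (mul_self_nonneg μ) hD
    linarith

lemma my_int_dirac (f : ℝ → ℝ) (a : ℝ) : Integrable f (Measure.dirac a) := by
  apply (integrable_const (f a)).congr
  rw [Filter.EventuallyEq, ae_dirac_eq]
  simp

noncomputable def myρ (D : ℝ) : Measure ℝ :=
  (2⁻¹ : ℝ≥0∞) • (Measure.dirac (-D) + Measure.dirac D)

lemma myρ_prob (D : ℝ) : IsProbabilityMeasure (myρ D) := by
  constructor
  simp [myρ]
  exact ENNReal.inv_two_add_inv_two

lemma myρ_integral (D : ℝ) (f : ℝ → ℝ) : ∫ x, f x ∂(myρ D) = (f (-D) + f D) / 2 := by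
  rw [myρ, integral_smul_measure, integral_add_measure (my_int_dirac f _) (my_int_dirac f _),
    integral_dirac, integral_dirac]
  simp [ENNReal.toReal_inv]
  ring

lemma myρ_Icc (D : ℝ) (hD : 0 ≤ D) : myρ D (Set.Icc (-D) D) = 1 := by
  have h1 : (-D) ∈ Set.Icc (-D) D := by constructor <;> linarith
  have h2 : D ∈ Set.Icc (-D) D := by constructor <;> linarith
  simp [myρ, Measure.dirac_apply' _ measurableSet_Icc, h1, h2]
  exact ENNReal.inv_two_add_inv_two

lemma myρ_value (D : ℝ) (hD : 0 ≤ D) : ∫ x, ∫ y, |x - y| ∂(myρ D) ∂(myρ D) = D := by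
  have hinner : ∀ x : ℝ, ∫ y, |x - y| ∂(myρ D) = (|x + D| + |x - D|) / 2 := by
    intro x
    rw [myρ_integral D (fun y => |x - y|)]
    ring_nf
  rw [myρ_integral]
  rw [hinner, hinner]
  rw [show (-D : ℝ) + D = 0 by ring, show (-D : ℝ) - D = -(D + D) by ring,
    show (D : ℝ) - D = 0 by ring, abs_neg, abs_zero,
    abs_of_nonneg (by linarith : (0 : ℝ) ≤ D + D)]
  ring

theorem stmt_2 (D : ℝ) (hD : 0 ≤ D) :
    (∀ ρ : Measure ℝ, IsProbabilityMeasure ρ → ρ (Set.Icc (-D) D) = 1 →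
      ∫ x, ∫ y, |x - y| ∂ρ ∂ρ ≤ D) ∧
    sSup {r : ℝ | ∃ ρ : Measure ℝ, IsProbabilityMeasure ρ ∧ ρ (Set.Icc (-D) D) = 1 ∧
      r = ∫ x, ∫ y, |x - y| ∂ρ ∂ρ} = D := by
  refine ⟨fun ρ hρ hsupp => my_part1 D hD ρ hρ hsupp, ?_⟩
  have hmem : D ∈ {r : ℝ | ∃ ρ : Measure ℝ, IsProbabilityMeasure ρ ∧ ρ (Set.Icc (-D) D) = 1 ∧
      r = ∫ x, ∫ y, |x - y| ∂ρ ∂ρ} :=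
    ⟨myρ D, myρ_prob D, myρ_Icc D hD, (myρ_value D hD).symm⟩
  have hub : ∀ r ∈ {r : ℝ | ∃ ρ : Measure ℝ, IsProbabilityMeasure ρ ∧ ρ (Set.Icc (-D) D) = 1 ∧
      r = ∫ x, ∫ y, |x - y| ∂ρ ∂ρ}, r ≤ D := by
    rintro r ⟨ρ, hρ, hsupp, rfl⟩
    exact my_part1 D hD ρ hρ hsupp
  exact le_antisymm (csSup_le ⟨D, hmem⟩ hub) (le_csSup ⟨D, hub⟩ hmem)
end

section
/- Let μ₀, μ₁ be probability measures on a measurable space with densities h₀, h₁ with respect to a common measure α, where h_t = e^{u_t} 1_A / α(e^{u_t} 1_A) for u_t = t u₁ + (1−t) u₀ with bounded measurable u₀, u₁ and a measurable set A with α(e^{u₀}1_A), α(e^{u₁}1_A) > 0. Then the total variation distance satisfies 2‖μ₀ − μ₁‖_TV ≤ ∫₀¹ dt ∫ λ_t(dσ) | f(σ) − ∫ λ_t(dτ) f(τ) |, where f = u₁ − u₀ and λ_t(dσ) = h_t(σ) α(dσ). -/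
open MeasureTheory Real Set Metric

lemma aux_deriv9 {S : Type*} [MeasurableSpace S] (μ : Measure S) [IsFiniteMeasure μ]
    (v w : S → ℝ) (hv : Measurable v) (hw : Measurable w)
    (D : ℝ) (hD : 0 ≤ D) (hbv : ∀ s, |v s| ≤ D) (hbw : ∀ s, |w s| ≤ D) (t₀ : ℝ) :
    HasDerivAt (fun t => ∫ s, w s * Real.exp (t * v s) ∂μ)
      (∫ s, v s * w s * Real.exp (t₀ * v s) ∂μ) t₀ := by
  have key := hasDerivAt_integral_of_dominated_loc_of_deriv_le (μ := μ)
    (F := fun t s => w s * Real.exp (t * v s))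
    (F' := fun t s => v s * w s * Real.exp (t * v s))
    (x₀ := t₀) (bound := fun _ => D * D * Real.exp ((|t₀| + 1) * D))
    (s := ball t₀ 1) (ball_mem_nhds t₀ one_pos) ?_ ?_ ?_ ?_ ?_ ?_
  · exact key.2
  · filter_upwards with t
    exact ((hw.mul ((measurable_const.mul hv).exp)).aestronglyMeasurable)
  · apply Integrable.mono' (g := fun _ => D * Real.exp ((|t₀| + 1) * D))
      (integrable_const _)
      ((hw.mul ((measurable_const.mul hv).exp)).aestronglyMeasurable)
    filter_upwards with s
    simp only [Pi.mul_apply]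
    rw [Real.norm_eq_abs, abs_mul, abs_exp]
    have h1 : |w s| ≤ D := hbw s
    have h2 : Real.exp (t₀ * v s) ≤ Real.exp ((|t₀| + 1) * D) := by
      apply Real.exp_le_exp.2
      calc t₀ * v s ≤ |t₀ * v s| := le_abs_self _
        _ = |t₀| * |v s| := abs_mul _ _
        _ ≤ (|t₀| + 1) * D := by
            apply mul_le_mul (by linarith) (hbv s) (abs_nonneg _) (by positivity)
    exact mul_le_mul h1 h2 (Real.exp_nonneg _) hD
  · exact ((hv.mul hw).mul ((measurable_const.mul hv).exp)).aestronglyMeasurable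
  · filter_upwards with s t ht
    rw [Real.norm_eq_abs, abs_mul, abs_mul, abs_exp]
    have h2 : Real.exp (t * v s) ≤ Real.exp ((|t₀| + 1) * D) := by
      apply Real.exp_le_exp.2
      have : |t| ≤ |t₀| + 1 := by
        have := mem_ball_iff_norm.1 ht
        rw [Real.norm_eq_abs] at this
        calc |t| = |t₀ + (t - t₀)| := by ring_nf
          _ ≤ |t₀| + |t - t₀| := abs_add_le _ _
          _ ≤ |t₀| + 1 := by linarith
      calc t * v s ≤ |t * v s| := le_abs_self _
        _ = |t| * |v s| := abs_mul _ _
        _ ≤ (|t₀| + 1) * D := mul_le_mul this (hbv s) (abs_nonneg _) (by positivity)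
    exact mul_le_mul (mul_le_mul (hbv s) (hbw s) (abs_nonneg _) hD) h2
      (Real.exp_nonneg _) (by positivity)
  · exact integrable_const _
  · filter_upwards with s t _
    have h1 : HasDerivAt (fun t : ℝ => t * v s) (v s) t := hasDerivAt_mul_const _
    have h2 := (h1.exp).const_mul (w s)
    refine h2.congr_deriv ?_
    ring

theorem stmt_9 {S : Type*} [MeasurableSpace S] (α : Measure S) [IsFiniteMeasure α]
    (u₀ u₁ : S → ℝ) (hm₀ : Measurable u₀) (hm₁ : Measurable u₁)
    (C : ℝ) (hb₀ : ∀ s, |u₀ s| ≤ C) (hb₁ : ∀ s, |u₁ s| ≤ C)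
    (A : Set S) (hA : MeasurableSet A)
    (hZ : ∀ t ∈ Set.Icc (0 : ℝ) 1,
      0 < ∫ s in A, Real.exp (t * u₁ s + (1 - t) * u₀ s) ∂α) :
    let f : S → ℝ := fun s => u₁ s - u₀ s
    let h : ℝ → S → ℝ := fun t s =>
      A.indicator (fun s' => Real.exp (t * u₁ s' + (1 - t) * u₀ s')) s /
        ∫ s' in A, Real.exp (t * u₁ s' + (1 - t) * u₀ s') ∂α
    let lam : ℝ → Measure S := fun t => α.withDensity (fun s => ENNReal.ofReal (h t s))
    ∫ s, |h 1 s - h 0 s| ∂α ≤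
      ∫ t in (0 : ℝ)..1, ∫ σ, |f σ - ∫ τ, f τ ∂(lam t)| ∂(lam t) := by
  intro f h lam
  set Z : ℝ → ℝ := fun t => ∫ s' in A, Real.exp (t * u₁ s' + (1 - t) * u₀ s') ∂α with hZdef
  set W : ℝ → ℝ := fun t => ∫ s' in A, f s' * Real.exp (t * u₁ s' + (1 - t) * u₀ s') ∂α with hWdef
  have hZpos : ∀ t ∈ Set.Icc (0:ℝ) 1, 0 < Z t := hZ
  have hf_meas : Measurable f := hm₁.sub hm₀
  have hfb : ∀ s, |f s| ≤ 2 * |C| := by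
    intro s
    calc |f s| ≤ |u₁ s| + |u₀ s| := abs_sub _ _
      _ ≤ C + C := add_le_add (hb₁ s) (hb₀ s)
      _ ≤ 2 * |C| := by have := le_abs_self C; linarith
  have hub : ∀ t ∈ Set.Icc (0:ℝ) 1, ∀ s, |t * u₁ s + (1 - t) * u₀ s| ≤ |C| := by
    intro t ht s
    obtain ⟨ht0, ht1⟩ := ht
    have e1 : |t * u₁ s| ≤ t * |C| := by
      rw [abs_mul, abs_of_nonneg ht0]
      exact mul_le_mul_of_nonneg_left ((hb₁ s).trans (le_abs_self C)) ht0
    have e2 : |(1 - t) * u₀ s| ≤ (1 - t) * |C| := by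
      rw [abs_mul, abs_of_nonneg (show (0:ℝ) ≤ 1 - t by linarith)]
      exact mul_le_mul_of_nonneg_left ((hb₀ s).trans (le_abs_self C)) (by linarith)
    calc |t * u₁ s + (1 - t) * u₀ s| ≤ |t * u₁ s| + |(1 - t) * u₀ s| := abs_add_le _ _
      _ ≤ t * |C| + (1 - t) * |C| := add_le_add e1 e2
      _ = |C| := by ring
  -- rewrite exp in split form
  have hexp_eq : ∀ (t : ℝ) (s : S),
      Real.exp (t * u₁ s + (1 - t) * u₀ s) = Real.exp (u₀ s) * Real.exp (t * f s) := by
    intro t s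
    rw [← Real.exp_add]
    congr 1
    simp only [f]
    ring
  set DD : ℝ := 2 * |C| + (2 * |C| + 1) * Real.exp |C| with hDDdef
  have hDD0 : 0 ≤ DD := by positivity
  have hexpC : ∀ s, Real.exp (u₀ s) ≤ Real.exp |C| := fun s =>
    Real.exp_le_exp.2 ((le_abs_self _).trans ((hb₀ s).trans (le_abs_self C)))
  have hZder : ∀ t₀ : ℝ, HasDerivAt Z (W t₀) t₀ := by
    intro t₀
    have key := aux_deriv9 (α.restrict A) f (fun s => Real.exp (u₀ s)) hf_meas hm₀.exp
      DD hDD0 (fun s => (hfb s).trans (by rw [hDDdef]; nlinarith [Real.exp_pos |C|, abs_nonneg C]))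
      (fun s => by
        rw [abs_of_nonneg (Real.exp_nonneg _)]
        calc Real.exp (u₀ s) ≤ Real.exp |C| := hexpC s
          _ ≤ DD := by rw [hDDdef]; nlinarith [abs_nonneg C, Real.exp_pos |C|]) t₀
    have e1 : Z = fun t => ∫ s, Real.exp (u₀ s) * Real.exp (t * f s) ∂(α.restrict A) := by
      funext t
      exact integral_congr_ae (Filter.Eventually.of_forall fun s => hexp_eq t s)
    have e2 : W t₀ = ∫ s, f s * Real.exp (u₀ s) * Real.exp (t₀ * f s) ∂(α.restrict A) := by
      apply integral_congr_ae (Filter.Eventually.of_forall fun s => ?_)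
      rw [hexp_eq t₀ s]; ring
    rw [e1, e2]
    exact key
  have hWder : ∀ t₀ : ℝ, ∃ V, HasDerivAt W V t₀ := by
    intro t₀
    have key := aux_deriv9 (α.restrict A) f (fun s => f s * Real.exp (u₀ s)) hf_meas
      (hf_meas.mul hm₀.exp)
      DD hDD0 (fun s => (hfb s).trans (by rw [hDDdef]; nlinarith [Real.exp_pos |C|, abs_nonneg C]))
      (fun s => by
        rw [abs_mul, abs_of_nonneg (Real.exp_nonneg _)]
        calc |f s| * Real.exp (u₀ s) ≤ (2 * |C|) * Real.exp |C| := by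
              apply mul_le_mul (hfb s) (hexpC s) (Real.exp_nonneg _) (by positivity)
          _ ≤ DD := by rw [hDDdef]; nlinarith [abs_nonneg C, Real.exp_pos |C|]) t₀
    have e1 : W = fun t => ∫ s, (f s * Real.exp (u₀ s)) * Real.exp (t * f s) ∂(α.restrict A) := by
      funext t
      apply integral_congr_ae (Filter.Eventually.of_forall fun s => ?_)
      rw [hexp_eq t s]; ring
    rw [e1]
    exact ⟨_, key⟩
  have hZcont : Continuous Z := by
    rw [continuous_iff_continuousAt]; intro t; exact (hZder t).continuousAt
  have hWcont : Continuous W := by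
    rw [continuous_iff_continuousAt]; intro t
    obtain ⟨V, hV⟩ := hWder t; exact hV.continuousAt
  -- minimum of Z
  obtain ⟨t₁, ht₁, hmin⟩ := isCompact_Icc.exists_isMinOn (Set.nonempty_Icc.2 zero_le_one)
    (hZcont.continuousOn (s := Set.Icc (0:ℝ) 1))
  set m : ℝ := Z t₁ with hmdef
  have hm : 0 < m := hZpos t₁ ht₁
  have hmle : ∀ t ∈ Set.Icc (0:ℝ) 1, m ≤ Z t := fun t ht => hmin ht
  -- bound for W on Icc
  obtain ⟨B, hB⟩ := isCompact_Icc.exists_bound_of_continuousOn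
    (hWcont.continuousOn (s := Set.Icc (0:ℝ) 1))
  set H : ℝ → S → ℝ := fun t s => h t s * (f s - W t / Z t) with hHdef
  have hhval : ∀ (t : ℝ) (s : S),
      h t s = A.indicator (fun s' => Real.exp (t * u₁ s' + (1 - t) * u₀ s')) s / Z t :=
    fun _ _ => rfl
  have hh_nonneg : ∀ t ∈ Set.Icc (0:ℝ) 1, ∀ s, 0 ≤ h t s := by
    intro t ht s
    rw [hhval]
    exact div_nonneg (Set.indicator_nonneg (fun _ _ => Real.exp_nonneg _) s) (hZpos t ht).le
  have hh_le : ∀ t ∈ Set.Icc (0:ℝ) 1, ∀ s, h t s ≤ Real.exp |C| / m := by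
    intro t ht s
    rw [hhval]
    apply div_le_div₀ (Real.exp_nonneg _) ?_ hm (hmle t ht)
    by_cases hs : s ∈ A
    · rw [Set.indicator_of_mem hs]
      exact Real.exp_le_exp.2 ((le_abs_self _).trans (hub t ht s))
    · rw [Set.indicator_of_notMem hs]; positivity
  -- pointwise derivative of h in t
  have hhder : ∀ (s : S), ∀ t ∈ Set.uIcc (0:ℝ) 1, HasDerivAt (fun t' => h t' s) (H t s) t := by
    intro s t ht
    rw [Set.uIcc_of_le zero_le_one] at ht
    have hZt : Z t ≠ 0 := (hZpos t ht).ne'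
    by_cases hs : s ∈ A
    · have h1 : HasDerivAt (fun t' : ℝ => t' * u₁ s + (1 - t') * u₀ s) (f s) t := by
        have := ((hasDerivAt_id t).mul_const (u₁ s)).add
          (((hasDerivAt_const t (1:ℝ)).sub (hasDerivAt_id t)).mul_const (u₀ s))
        refine this.congr_deriv ?_
        simp only [f]; ring
      have hnum := h1.exp
      have hdiv := hnum.div (hZder t) hZt
      have e1 : (fun t' => h t' s)
          = fun t' => Real.exp (t' * u₁ s + (1 - t') * u₀ s) / Z t' := by
        funext t'
        rw [hhval, Set.indicator_of_mem hs]
      rw [e1]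
      refine hdiv.congr_deriv ?_
      simp only [hHdef, hhval, Set.indicator_of_mem hs]
      field_simp
    · have e1 : (fun t' => h t' s) = fun _ => (0:ℝ) := by
        funext t'
        rw [hhval, Set.indicator_of_notMem hs, zero_div]
      have e2 : H t s = 0 := by
        simp only [hHdef, hhval t s, Set.indicator_of_notMem hs, zero_div, zero_mul]
      rw [e1, e2]
      exact hasDerivAt_const _ _
  -- continuity in t and FTC
  have hHcont : ∀ s : S, ContinuousOn (fun t => H t s) (Set.uIcc (0:ℝ) 1) := by
    intro s
    rw [Set.uIcc_of_le zero_le_one]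
    have h1 : ContinuousOn (fun t => h t s) (Set.Icc (0:ℝ) 1) := by
      intro t ht
      exact ((hhder s t (by rwa [Set.uIcc_of_le zero_le_one])).continuousAt).continuousWithinAt
    have h2 : ContinuousOn (fun t => f s - W t / Z t) (Set.Icc (0:ℝ) 1) :=
      continuousOn_const.sub ((hWcont.continuousOn).div (hZcont.continuousOn)
        (fun t ht => (hZpos t ht).ne'))
    simpa only [hHdef, Pi.mul_def] using h1.mul h2
  have hftc : ∀ s : S, h 1 s - h 0 s = ∫ t in (0:ℝ)..1, H t s := by
    intro s
    exact (intervalIntegral.integral_eq_sub_of_hasDerivAt (fun t ht => hhder s t ht)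
      ((hHcont s).intervalIntegrable)).symm
  have habs : ∀ s : S, |h 1 s - h 0 s| ≤ ∫ t in (0:ℝ)..1, |H t s| := by
    intro s
    rw [hftc s]
    exact intervalIntegral.abs_integral_le_integral_abs zero_le_one
  -- joint measurability
  have hHmeas : Measurable fun p : ℝ × S => H p.1 p.2 := by
    have e1 : (fun p : ℝ × S => H p.1 p.2) = fun p : ℝ × S =>
        (A.indicator (fun _ => (1:ℝ)) p.2) * Real.exp (p.1 * u₁ p.2 + (1 - p.1) * u₀ p.2)
          / Z p.1 * (f p.2 - W p.1 / Z p.1) := by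
      funext p
      by_cases hs : p.2 ∈ A
      · simp only [hHdef, hhval, Set.indicator_of_mem hs, one_mul]
      · simp only [hHdef, hhval, Set.indicator_of_notMem hs, zero_mul, zero_div]
    rw [e1]
    refine Measurable.mul (Measurable.div (Measurable.mul ?_ ?_) ?_) (Measurable.sub ?_ (Measurable.div ?_ ?_))
    · exact (measurable_const.indicator hA).comp measurable_snd
    · exact ((measurable_fst.mul (hm₁.comp measurable_snd)).add
        ((measurable_const.sub measurable_fst).mul (hm₀.comp measurable_snd))).exp
    · exact hZcont.measurable.comp measurable_fst
    · exact hf_meas.comp measurable_snd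
    · exact hWcont.measurable.comp measurable_fst
    · exact hZcont.measurable.comp measurable_fst
  -- uniform bound
  set K : ℝ := Real.exp |C| / m * (2 * |C| + B / m) with hKdef
  have hBnn : 0 ≤ B := le_trans (norm_nonneg _) (hB 0 (by constructor <;> norm_num))
  have hHb : ∀ t ∈ Set.Icc (0:ℝ) 1, ∀ s, |H t s| ≤ K := by
    intro t ht s
    have h0 := hh_nonneg t ht s
    have h1 := hh_le t ht s
    have h2 : |f s - W t / Z t| ≤ 2 * |C| + B / m := by
      calc |f s - W t / Z t| ≤ |f s| + |W t / Z t| := abs_sub _ _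
        _ ≤ 2 * |C| + B / m := by
            refine add_le_add (hfb s) ?_
            rw [abs_div]
            refine div_le_div₀ hBnn ?_ hm ?_
            · rw [← Real.norm_eq_abs]; exact hB t ht
            · rw [abs_of_pos (hZpos t ht)]; exact hmle t ht
    have e1 : |H t s| = h t s * |f s - W t / Z t| := by
      simp only [hHdef]
      rw [abs_mul, abs_of_nonneg h0]
    rw [e1, hKdef]
    exact mul_le_mul h1 h2 (abs_nonneg _) (div_nonneg (Real.exp_nonneg _) hm.le)
  -- product integrability
  haveI hfin : IsFiniteMeasure (volume.restrict (Set.Ioc (0:ℝ) 1)) := by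
    constructor
    rw [Measure.restrict_apply_univ]
    simp [Real.volume_Ioc]
  have hprodeq : α.prod (volume.restrict (Set.Ioc (0:ℝ) 1))
      = (α.prod volume).restrict (Set.univ ×ˢ Set.Ioc (0:ℝ) 1) := by
    conv_lhs => rw [← Measure.restrict_univ (μ := α)]
    rw [Measure.prod_restrict]
  have hmem : ∀ᵐ p : S × ℝ ∂(α.prod (volume.restrict (Set.Ioc (0:ℝ) 1))),
      p.2 ∈ Set.Ioc (0:ℝ) 1 := by
    rw [hprodeq]
    filter_upwards [ae_restrict_mem (MeasurableSet.univ.prod measurableSet_Ioc)] with p hp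
    exact hp.2
  have hGmeas : Measurable fun p : S × ℝ => |H p.2 p.1| := (hHmeas.comp measurable_swap).abs
  have hint : Integrable (Function.uncurry fun s t => |H t s|)
      (α.prod (volume.restrict (Set.Ioc (0:ℝ) 1))) := by
    apply Integrable.mono' (integrable_const K) hGmeas.aestronglyMeasurable
    filter_upwards [hmem] with p hp
    rw [Real.norm_eq_abs, abs_abs]
    exact hHb p.2 (Set.Ioc_subset_Icc_self hp) p.1
  have hswap := MeasureTheory.integral_integral_swap (f := fun s t => |H t s|) hint
  have hintleft : Integrable (fun s => ∫ t in Set.Ioc (0:ℝ) 1, |H t s|) α :=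
    hint.integral_prod_left
  -- per-t identities
  have hht_meas : ∀ t : ℝ, Measurable (h t) := by
    intro t
    have e1 : h t = fun s =>
        A.indicator (fun s' => Real.exp (t * u₁ s' + (1 - t) * u₀ s')) s / Z t :=
      funext fun s => hhval t s
    rw [e1]
    exact (Measurable.indicator ((hm₁.const_mul t).add (hm₀.const_mul (1 - t))).exp hA).div_const _
  have hkey : ∀ t ∈ Set.Icc (0:ℝ) 1, ∀ (g : S → ℝ), Measurable g →
      ∫ σ, g σ ∂(lam t) = ∫ s, h t s * g s ∂α := by
    intro t ht g hg
    have e0 : ∫ σ, g σ ∂(lam t) = ∫ s, (h t s).toNNReal • g s ∂α :=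
      integral_withDensity_eq_integral_smul ((hht_meas t).real_toNNReal) g
    rw [e0]
    refine integral_congr_ae (Filter.Eventually.of_forall fun s => ?_)
    simp only [NNReal.smul_def, Real.coe_toNNReal _ (hh_nonneg t ht s), smul_eq_mul]
  have hmean : ∀ t ∈ Set.Icc (0:ℝ) 1, ∫ τ, f τ ∂(lam t) = W t / Z t := by
    intro t ht
    rw [hkey t ht f hf_meas]
    have e1 : (fun s => h t s * f s) = fun s =>
        A.indicator (fun s' => f s' * Real.exp (t * u₁ s' + (1 - t) * u₀ s')) s / Z t := by
      funext s
      by_cases hs : s ∈ A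
      · rw [hhval, Set.indicator_of_mem hs, Set.indicator_of_mem hs]; ring
      · rw [hhval, Set.indicator_of_notMem hs, Set.indicator_of_notMem hs, zero_div, zero_mul]
    rw [e1, integral_div, integral_indicator hA]
  have hint_eq : ∀ t ∈ Set.Icc (0:ℝ) 1,
      ∫ s, |H t s| ∂α = ∫ σ, |f σ - ∫ τ, f τ ∂(lam t)| ∂(lam t) := by
    intro t ht
    rw [hmean t ht, hkey t ht (fun σ => |f σ - W t / Z t|) ((hf_meas.sub measurable_const).abs)]
    refine integral_congr_ae (Filter.Eventually.of_forall fun s => ?_)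
    simp only [hHdef]
    rw [abs_mul, abs_of_nonneg (hh_nonneg t ht s)]
  -- assembly
  calc ∫ s, |h 1 s - h 0 s| ∂α
      ≤ ∫ s, (∫ t in Set.Ioc (0:ℝ) 1, |H t s|) ∂α := by
        refine integral_mono_of_nonneg (Filter.Eventually.of_forall fun s => abs_nonneg _)
          hintleft (Filter.Eventually.of_forall fun s => ?_)
        dsimp only
        rw [← intervalIntegral.integral_of_le zero_le_one]
        exact habs s
    _ = ∫ t in Set.Ioc (0:ℝ) 1, ∫ s, |H t s| ∂α := hswap
    _ = ∫ t in Set.Ioc (0:ℝ) 1, ∫ σ, |f σ - ∫ τ, f τ ∂(lam t)| ∂(lam t) := by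
        refine setIntegral_congr_fun measurableSet_Ioc fun t ht => ?_
        exact hint_eq t (Set.Ioc_subset_Icc_self ht)
    _ = ∫ t in (0:ℝ)..1, ∫ σ, |f σ - ∫ τ, f τ ∂(lam t)| ∂(lam t) :=
        (intervalIntegral.integral_of_le zero_le_one).symm
end

section
/- For any probability measure λ on a measurable space and bounded measurable f with values in [a,b], one has the mean absolute deviation bound ∫ |f − ∫f dλ| dλ ≤ (b−a)/2. -/
open MeasureTheory

theorem stmt_11 {S : Type*} [MeasurableSpace S] (lam : Measure S) [IsProbabilityMeasure lam]
    (f : S → ℝ) (hf : Measurable f) (a b : ℝ) (hab : ∀ x, f x ∈ Set.Icc a b) :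
    ∫ σ, |f σ - ∫ τ, f τ ∂lam| ∂lam ≤ (b - a) / 2 := by
  set m := ∫ τ, f τ ∂lam with hm
  have hfi : Integrable f lam := by
    apply Integrable.mono' (integrable_const (max |a| |b|)) hf.aestronglyMeasurable
    filter_upwards with x
    rcases hab x with ⟨h1, h2⟩
    rw [Real.norm_eq_abs, abs_le]
    constructor
    · calc -(max |a| |b|) ≤ -|a| := by simp
        _ ≤ a := neg_abs_le a
        _ ≤ f x := h1
    · calc f x ≤ b := h2
        _ ≤ |b| := le_abs_self b
        _ ≤ max |a| |b| := le_max_right _ _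
  have hma : a ≤ m := by
    calc a = ∫ _, a ∂lam := by simp
      _ ≤ m := integral_mono (integrable_const a) hfi (fun x => (hab x).1)
  have hmb : m ≤ b := by
    calc m ≤ ∫ _, b ∂lam := integral_mono hfi (integrable_const b) (fun x => (hab x).2)
      _ = b := by simp
  set A := {σ | m < f σ} with hAdef
  have hA : MeasurableSet A := measurableSet_lt measurable_const hf
  have hgi : Integrable (fun σ => f σ - m) lam := hfi.sub (integrable_const m)
  have habsi : Integrable (fun σ => |f σ - m|) lam := hgi.abs
  have hzero : ∫ σ, (f σ - m) ∂lam = 0 := by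
    rw [integral_sub hfi (integrable_const m)]
    simp [hm]
  have hsplit0 : ∫ σ in A, (f σ - m) ∂lam + ∫ σ in Aᶜ, (f σ - m) ∂lam = 0 := by
    rw [integral_add_compl hA hgi]; exact hzero
  have hsplit : ∫ σ in A, |f σ - m| ∂lam + ∫ σ in Aᶜ, |f σ - m| ∂lam
      = ∫ σ, |f σ - m| ∂lam := integral_add_compl hA habsi
  have h1 : ∫ σ in A, |f σ - m| ∂lam = ∫ σ in A, (f σ - m) ∂lam := by
    apply setIntegral_congr_fun hA
    intro x hx
    exact abs_of_pos (sub_pos.2 hx)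
  have h2 : ∫ σ in Aᶜ, |f σ - m| ∂lam = ∫ σ in Aᶜ, (m - f σ) ∂lam := by
    apply setIntegral_congr_fun hA.compl
    intro x hx
    have hx' : f x ≤ m := not_lt.1 hx
    show |f x - m| = m - f x
    rw [abs_of_nonpos (sub_nonpos.2 hx')]
    ring
  have h2' : ∫ σ in Aᶜ, (m - f σ) ∂lam = -∫ σ in Aᶜ, (f σ - m) ∂lam := by
    rw [← integral_neg]
    congr 1 with x
    ring
  set p := (lam A).toReal with hp
  have hpq : (lam Aᶜ).toReal = 1 - p := by
    rw [measure_compl hA (measure_ne_top lam A), measure_univ,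
      ENNReal.toReal_sub_of_le prob_le_one ENNReal.one_ne_top, ENNReal.toReal_one]
  have hp0 : 0 ≤ p := ENNReal.toReal_nonneg
  have hp1 : p ≤ 1 := by
    have := ENNReal.toReal_mono ENNReal.one_ne_top (prob_le_one (μ := lam) (s := A))
    simpa using this
  have hb1 : ∫ σ in A, (f σ - m) ∂lam ≤ (b - m) * p := by
    calc ∫ σ in A, (f σ - m) ∂lam ≤ ∫ _ in A, (b - m) ∂lam := by
          apply setIntegral_mono_on hgi.integrableOn (integrableOn_const (measure_lt_top lam A).ne) hA
          intro x _
          exact sub_le_sub_right (hab x).2 m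
      _ = (b - m) * p := by rw [setIntegral_const]; rw [smul_eq_mul, Measure.real, ← hp]; ring
  have hb2 : ∫ σ in Aᶜ, (m - f σ) ∂lam ≤ (m - a) * (1 - p) := by
    calc ∫ σ in Aᶜ, (m - f σ) ∂lam ≤ ∫ _ in Aᶜ, (m - a) ∂lam := by
          apply setIntegral_mono_on (by exact (integrable_const m).sub hfi |>.integrableOn)
            (integrableOn_const (measure_lt_top lam Aᶜ).ne) hA.compl
          intro x _
          exact sub_le_sub_left (hab x).1 m
      _ = (m - a) * (1 - p) := by rw [setIntegral_const, smul_eq_mul, Measure.real, hpq]; ring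
  set X := ∫ σ in A, (f σ - m) ∂lam with hX
  set Y := ∫ σ in Aᶜ, (m - f σ) ∂lam with hY
  have hXY : X = Y := by
    have := hsplit0
    rw [h2'] at *
    linarith
  have hI : ∫ σ, |f σ - m| ∂lam = X + Y := by
    rw [← hsplit, h1, h2]
  have hX0 : 0 ≤ X := by
    apply setIntegral_nonneg hA
    intro x hx
    exact le_of_lt (sub_pos.2 hx)
  rw [hI]
  have hY0 : 0 ≤ Y := hXY ▸ hX0
  have hXsq : X * X ≤ (b - m) * p * ((m - a) * (1 - p)) := by
    calc X * X = X * Y := by rw [hXY]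
      _ ≤ (b - m) * p * ((m - a) * (1 - p)) :=
        mul_le_mul hb1 hb2 hY0 (mul_nonneg (by linarith) hp0)
  have huv : (b - m) * (m - a) ≤ ((b - a) / 2) ^ 2 := by nlinarith [sq_nonneg (b - m - (m - a))]
  have hpq4 : p * (1 - p) ≤ 1 / 4 := by nlinarith [sq_nonneg (2 * p - 1)]
  have hXsq' : X * X ≤ ((b - a) / 4) ^ 2 := by
    have h1' : (b - m) * p * ((m - a) * (1 - p)) = ((b - m) * (m - a)) * (p * (1 - p)) := by ring
    nlinarith [mul_nonneg (mul_nonneg (sub_nonneg.2 hmb) (sub_nonneg.2 hma)) (mul_nonneg hp0 (by linarith : (0:ℝ) ≤ 1 - p)), mul_nonneg hp0 (by linarith : (0:ℝ) ≤ 1 - p)]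
  have hfin : X ≤ (b - a) / 4 := by nlinarith [hX0, hXsq', (by linarith : a ≤ b)]
  linarith [hXY]
end

section
/- For two probability densities h₀ = e^{u₀}/Z₀ and h₁ = e^{u₁}/Z₁ on a probability space (S, α) (with u₀, u₁ bounded measurable, Z_i = ∫ e^{u_i} dα), if the oscillation of u₁ − u₀ satisfies osc(u₁−u₀) ≤ ε, then ∫ |h₁ − h₀| dα ≤ ε/2. -/
open MeasureTheory

lemma aux_exp_low (u : ℝ) : Real.exp u - 1 ≤ u * Real.exp u := by
  have h1 := Real.add_one_le_exp (-u)
  have h2 : Real.exp (-u) * Real.exp u = 1 := by rw [← Real.exp_add]; simp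
  nlinarith [Real.exp_pos u]

lemma aux_exp_key (u : ℝ) (hu : 0 ≤ u) : 2 * (Real.exp u - 1) ≤ u * (Real.exp u + 1) := by
  set φ : ℝ → ℝ := fun v => v * (Real.exp v + 1) - 2 * (Real.exp v - 1) with hφ
  have hder : ∀ v, HasDerivAt φ (v * Real.exp v - Real.exp v + 1) v := by
    intro v
    have h1 : HasDerivAt (fun v : ℝ => v * (Real.exp v + 1))
        (1 * (Real.exp v + 1) + v * Real.exp v) v :=
      (hasDerivAt_id v).mul ((Real.hasDerivAt_exp v).add_const 1)
    have h2 : HasDerivAt (fun v : ℝ => 2 * (Real.exp v - 1)) (2 * Real.exp v) v := by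
      have := ((Real.hasDerivAt_exp v).sub_const 1).const_mul 2
      simpa using this
    have := h1.sub h2
    refine this.congr_deriv ?_
    ring
  have hmono : MonotoneOn φ (Set.Ici (0:ℝ)) := by
    apply monotoneOn_of_deriv_nonneg (convex_Ici 0)
    · exact Continuous.continuousOn (by continuity)
    · intro x _
      exact ((hder x).differentiableAt).differentiableWithinAt
    · intro x hx
      rw [(hder x).deriv]
      have hx0 : 0 ≤ x := by
        rw [interior_Ici] at hx
        exact le_of_lt hx
      nlinarith [aux_exp_low x]
  have h := hmono (Set.mem_Ici.mpr le_rfl) (Set.mem_Ici.mpr hu) hu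
  have h0 : φ 0 = 0 := by simp [hφ]
  rw [h0] at h
  simp only [hφ] at h
  linarith

lemma aux_exp_key2 (b x : ℝ) (hb : 0 ≤ b) (hx : 0 ≤ x) :
    4 * (Real.exp b - 1) * (Real.exp x - 1) ≤ (b + x) * (Real.exp (b + x) - 1) := by
  set u := (b + x) / 2 with hu
  have hu0 : 0 ≤ u := by positivity
  have hkey := aux_exp_key u hu0
  have hge : 1 ≤ Real.exp u := Real.one_le_exp hu0
  have e1 : Real.exp (b/2) * Real.exp (b/2) = Real.exp b := by
    rw [← Real.exp_add]; ring_nf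
  have e2 : Real.exp (x/2) * Real.exp (x/2) = Real.exp x := by
    rw [← Real.exp_add]; ring_nf
  have e3 : Real.exp (b/2) * Real.exp (x/2) = Real.exp u := by
    rw [← Real.exp_add]; congr 1; rw [hu]; ring
  have e4 : Real.exp u * Real.exp u = Real.exp (b + x) := by
    rw [← Real.exp_add]; congr 1; rw [hu]; ring
  have step1 : 4 * (Real.exp b - 1) * (Real.exp x - 1) ≤ 4 * (Real.exp u - 1)^2 := by
    nlinarith [sq_nonneg (Real.exp (b/2) - Real.exp (x/2))]
  have step2 : 4 * (Real.exp u - 1)^2 ≤ (b + x) * (Real.exp (b + x) - 1) := by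
    nlinarith [hkey, hge]
  linarith

lemma aux_exp_key3 (a b : ℝ) (ha : a ≤ 0) (hb : 0 ≤ b) :
    4 * (Real.exp b - 1) * (1 - Real.exp a) ≤ (b - a) * (Real.exp b - Real.exp a) := by
  have h := aux_exp_key2 b (-a) hb (by linarith)
  have h1 : Real.exp (-a) * Real.exp a = 1 := by rw [← Real.exp_add]; simp
  have h2 : Real.exp (b + -a) * Real.exp a = Real.exp b := by
    rw [← Real.exp_add]; congr 1; ring
  have := mul_le_mul_of_nonneg_right h (Real.exp_pos a).le
  have l : 4 * (Real.exp b - 1) * (1 - Real.exp a)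
      = 4 * (Real.exp b - 1) * (Real.exp (-a) - 1) * Real.exp a := by
    linear_combination (-(4:ℝ) * (Real.exp b - 1)) * h1
  have r : (b - a) * (Real.exp b - Real.exp a)
      = (b + -a) * (Real.exp (b + -a) - 1) * Real.exp a := by
    linear_combination (a - b) * h2
  linarith [this]


lemma aux_final_arith (A B p q I ε : ℝ) (hAnn : 0 ≤ A) (hBnn : 0 ≤ B)
    (hε0 : 0 ≤ ε) (hpq : p + q = 1)
    (hIA : I ≤ 2 * (A * p)) (hIB : I ≤ 2 * (B * q))
    (hkey : 4 * A * B ≤ ε * (A + B)) : I ≤ ε / 2 := by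
  have e1 : I * B ≤ 2 * (A * p) * B := mul_le_mul_of_nonneg_right hIA hBnn
  have e2 : I * A ≤ 2 * (B * q) * A := mul_le_mul_of_nonneg_right hIB hAnn
  have e3 : 2 * (A * p) * B + 2 * (B * q) * A = 2 * A * B := by
    linear_combination (2 * A * B) * hpq
  by_cases hABz : A + B = 0
  · have hA0 : A = 0 := by linarith
    rw [hA0] at hIA
    simp only [zero_mul, mul_zero] at hIA
    linarith
  · have hABpos : 0 < A + B := lt_of_le_of_ne (by linarith) (Ne.symm hABz)
    have e4 : (A + B) * I ≤ (A + B) * (ε / 2) := by nlinarith [e1, e2, e3, hkey]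
    exact le_of_mul_le_mul_left e4 hABpos

theorem stmt_15 {S : Type*} [MeasurableSpace S] (α : Measure S) [IsProbabilityMeasure α]
    (u₀ u₁ : S → ℝ) (hm₀ : Measurable u₀) (hm₁ : Measurable u₁)
    (C : ℝ) (hb₀ : ∀ s, |u₀ s| ≤ C) (hb₁ : ∀ s, |u₁ s| ≤ C)
    (ε : ℝ) (hosc : ∀ x y, (u₁ x - u₀ x) - (u₁ y - u₀ y) ≤ ε) :
    ∫ s, |Real.exp (u₁ s) / (∫ s', Real.exp (u₁ s') ∂α)
          - Real.exp (u₀ s) / (∫ s', Real.exp (u₀ s') ∂α)| ∂α ≤ ε / 2 := by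
  -- nonempty
  have hS : Nonempty S := by
    by_contra h
    rw [not_nonempty_iff] at h
    have h1 : α Set.univ = 1 := measure_univ
    rw [Set.univ_eq_empty_iff.mpr h, measure_empty] at h1
    exact zero_ne_one h1
  obtain ⟨s₀⟩ := hS
  have hε0 : 0 ≤ ε := by have := hosc s₀ s₀; linarith
  -- integrability of exp ∘ u
  have hint : ∀ u : S → ℝ, Measurable u → (∀ s, |u s| ≤ C) →
      Integrable (fun s => Real.exp (u s)) α := by
    intro u hm hb
    refine Integrable.mono' (integrable_const (Real.exp C)) hm.exp.aestronglyMeasurable ?_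
    filter_upwards with s
    rw [Real.norm_eq_abs, abs_of_pos (Real.exp_pos _)]
    exact Real.exp_le_exp.mpr (abs_le.mp (hb s)).2
  have hint₀ := hint u₀ hm₀ hb₀
  have hint₁ := hint u₁ hm₁ hb₁
  set Z₀ := ∫ s', Real.exp (u₀ s') ∂α with hZ₀
  set Z₁ := ∫ s', Real.exp (u₁ s') ∂α with hZ₁
  have hZpos : ∀ (u : S → ℝ), Measurable u → (∀ s, |u s| ≤ C) →
      0 < ∫ s', Real.exp (u s') ∂α := by
    intro u hm hb
    have h1 : Real.exp (-C) ≤ ∫ s', Real.exp (u s') ∂α := by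
      calc Real.exp (-C) = ∫ _, Real.exp (-C) ∂α := by simp
      _ ≤ ∫ s', Real.exp (u s') ∂α := by
          refine integral_mono (integrable_const _) (hint u hm hb) fun s => ?_
          exact Real.exp_le_exp.mpr (neg_le_of_abs_le (hb s))
    exact lt_of_lt_of_le (Real.exp_pos _) h1
  have hZ₀pos : 0 < Z₀ := hZpos u₀ hm₀ hb₀
  have hZ₁pos : 0 < Z₁ := hZpos u₁ hm₁ hb₁
  set c := Real.log (Z₁ / Z₀) with hc
  set g : S → ℝ := fun s => (u₁ s - u₀ s) - c with hg
  set h₀ : S → ℝ := fun s => Real.exp (u₀ s) / Z₀ with hh₀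
  set D : S → ℝ := fun s => Real.exp (u₁ s) / Z₁ - Real.exp (u₀ s) / Z₀ with hD
  have hexpc : Real.exp c = Z₁ / Z₀ := Real.exp_log (by positivity)
  have hDeq : ∀ s, D s = h₀ s * (Real.exp (g s) - 1) := by
    intro s
    have : Real.exp (g s) = Real.exp (u₁ s) / Real.exp (u₀ s) * (Z₀ / Z₁) := by
      rw [hg]
      simp only [Real.exp_sub, hexpc]
      field_simp
    rw [hh₀, hD]
    simp only [this]
    have e0 := (Real.exp_pos (u₀ s)).ne'
    field_simp
  -- h₀ integrable, h₀ ≥ 0, ∫ h₀ = 1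
  have hh₀int : Integrable h₀ α := hint₀.div_const Z₀
  have hh₀nn : ∀ s, 0 ≤ h₀ s := fun s => by positivity
  have hh₀one : ∫ s, h₀ s ∂α = 1 := by
    rw [hh₀]
    rw [integral_div]
    exact div_self hZ₀pos.ne'
  -- h₀ * exp g = exp u₁ / Z₁, integral 1
  have hge : ∀ s, h₀ s * Real.exp (g s) = Real.exp (u₁ s) / Z₁ := by
    intro s
    have : Real.exp (g s) = Real.exp (u₁ s) / Real.exp (u₀ s) * (Z₀ / Z₁) := by
      rw [hg]
      simp only [Real.exp_sub, hexpc]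
      field_simp
    rw [hh₀, this]
    have e0 := (Real.exp_pos (u₀ s)).ne'
    field_simp
  have hgint : Integrable (fun s => h₀ s * Real.exp (g s)) α := by
    simp only [hge]
    exact hint₁.div_const Z₁
  have hgone : ∫ s, h₀ s * Real.exp (g s) ∂α = 1 := by
    simp only [hge]
    rw [integral_div]
    exact div_self hZ₁pos.ne'
  have hDint : Integrable D α := (hint₁.div_const Z₁).sub (hint₀.div_const Z₀)
  have hDzero : ∫ s, D s ∂α = 0 := by
    have : ∀ s, D s = h₀ s * Real.exp (g s) - h₀ s := by
      intro s; rw [hDeq s]; ring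
    simp only [this]
    rw [integral_sub hgint hh₀int, hgone, hh₀one, sub_self]
  -- sup and inf of g
  have hgb : ∀ s, g s ≤ 2 * C + |c| := by
    intro s
    have := abs_le.mp (hb₀ s); have := abs_le.mp (hb₁ s)
    have := neg_abs_le c
    simp only [hg]
    linarith
  have hga : ∀ s, -(2 * C + |c|) ≤ g s := by
    intro s
    have := abs_le.mp (hb₀ s); have := abs_le.mp (hb₁ s)
    have := le_abs_self c
    simp only [hg]
    linarith
  have hbddA : BddAbove (Set.range g) := ⟨2 * C + |c|, by rintro y ⟨x, rfl⟩; exact hgb x⟩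
  have hbddB : BddBelow (Set.range g) := ⟨-(2 * C + |c|), by rintro y ⟨x, rfl⟩; exact hga x⟩
  have hne : (Set.range g).Nonempty := ⟨g s₀, s₀, rfl⟩
  set b := sSup (Set.range g) with hb
  set a := sInf (Set.range g) with ha
  have hgleb : ∀ s, g s ≤ b := fun s => le_csSup hbddA (Set.mem_range_self s)
  have haleg : ∀ s, a ≤ g s := fun s => csInf_le hbddB (Set.mem_range_self s)
  have hoscg : ∀ x y, g x - g y ≤ ε := by
    intro x y
    have := hosc x y
    simp only [hg]
    linarith
  have hbale : b - a ≤ ε := by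
    have hb' : b ≤ a + ε := by
      refine csSup_le hne ?_
      rintro y ⟨x, rfl⟩
      have ha' : g x - ε ≤ a := by
        refine le_csInf hne ?_
        rintro z ⟨w, rfl⟩
        have := hoscg x w
        linarith
      linarith
    linarith
  -- 0 ≤ b
  have hb0 : 0 ≤ b := by
    by_contra hbneg
    push_neg at hbneg
    have hle : ∫ s, h₀ s * Real.exp (g s) ∂α ≤ ∫ s, Real.exp b * h₀ s ∂α := by
      refine integral_mono hgint (hh₀int.const_mul _) fun s => ?_
      have := Real.exp_le_exp.mpr (hgleb s)
      have := hh₀nn s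
      nlinarith
    rw [hgone] at hle
    rw [integral_const_mul, hh₀one, mul_one] at hle
    have : Real.exp b < 1 := Real.exp_lt_one_iff.mpr hbneg
    linarith
  -- a ≤ 0
  have ha0 : a ≤ 0 := by
    by_contra haneg
    push_neg at haneg
    have hle : ∫ s, Real.exp a * h₀ s ∂α ≤ ∫ s, h₀ s * Real.exp (g s) ∂α := by
      refine integral_mono (hh₀int.const_mul _) hgint fun s => ?_
      have := Real.exp_le_exp.mpr (haleg s)
      have := hh₀nn s
      nlinarith
    rw [hgone] at hle
    rw [integral_const_mul, hh₀one, mul_one] at hle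
    have : 1 < Real.exp a := by rw [show (1:ℝ) = Real.exp 0 from (Real.exp_zero).symm]; exact Real.exp_lt_exp.mpr haneg
    linarith
  -- positive part set
  have hDmeas : Measurable D := ((hm₁.exp.div_const Z₁).sub (hm₀.exp.div_const Z₀))
  show ∫ s, |D s| ∂α ≤ ε / 2
  set P : Set S := {s | 0 < D s} with hP
  have hPmeas : MeasurableSet P := measurableSet_lt measurable_const hDmeas
  set A := Real.exp b - 1 with hA
  set B := 1 - Real.exp a with hB
  have hAnn : 0 ≤ A := by rw [hA]; linarith [Real.one_le_exp hb0]
  have hBnn : 0 ≤ B := by rw [hB]; linarith [Real.exp_le_one_iff.mpr ha0]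
  -- pointwise bounds
  have hDA : ∀ s, D s ≤ A * h₀ s := by
    intro s
    rw [hDeq s, hA]
    have h1 := Real.exp_le_exp.mpr (hgleb s)
    have h2 := hh₀nn s
    nlinarith
  have hDB : ∀ s, -D s ≤ B * h₀ s := by
    intro s
    rw [hDeq s, hB]
    have h1 := Real.exp_le_exp.mpr (haleg s)
    have h2 := hh₀nn s
    nlinarith
  set p := ∫ s in P, h₀ s ∂α with hp
  set q := ∫ s in Pᶜ, h₀ s ∂α with hq
  have hpq : p + q = 1 := by
    rw [hp, hq, integral_add_compl hPmeas hh₀int, hh₀one]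
  -- split the integral of |D|
  have habs : ∫ s, |D s| ∂α = (∫ s in P, D s ∂α) + ∫ s in Pᶜ, -D s ∂α := by
    rw [← integral_add_compl hPmeas (hDint.abs)]
    congr 1
    · refine setIntegral_congr_fun hPmeas fun s hs => ?_
      exact abs_of_pos hs
    · refine setIntegral_congr_fun hPmeas.compl fun s hs => ?_
      have h3 : ¬ (0 < D s) := hs
      exact abs_of_nonpos (by linarith [not_lt.mp h3])
  have hsplit : (∫ s in P, D s ∂α) + ∫ s in Pᶜ, D s ∂α = 0 := by
    rw [integral_add_compl hPmeas hDint, hDzero]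
  have hnegint : ∫ s in Pᶜ, -D s ∂α = - ∫ s in Pᶜ, D s ∂α := by
    rw [integral_neg]
  set I := ∫ s, |D s| ∂α with hI
  have hInn : 0 ≤ I := integral_nonneg fun s => abs_nonneg _
  have hI1 : I = 2 * ∫ s in P, D s ∂α := by
    rw [habs, hnegint]; linarith [hsplit]
  have hI2 : I = 2 * ∫ s in Pᶜ, -D s ∂α := by
    rw [habs, hnegint]; linarith [hsplit]
  -- set integral bounds
  have hIA : I ≤ 2 * (A * p) := by
    rw [hI1, hp]
    have h4 : (∫ s in P, D s ∂α) ≤ ∫ s in P, A * h₀ s ∂α :=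
      setIntegral_mono_on hDint.integrableOn
        ((hh₀int.const_mul A).integrableOn) hPmeas fun s _ => hDA s
    rw [integral_const_mul] at h4
    linarith
  have hIB : I ≤ 2 * (B * q) := by
    rw [hI2, hq]
    have h4 : (∫ s in Pᶜ, -D s ∂α) ≤ ∫ s in Pᶜ, B * h₀ s ∂α :=
      setIntegral_mono_on hDint.neg.integrableOn
        ((hh₀int.const_mul B).integrableOn) hPmeas.compl fun s _ => hDB s
    rw [integral_const_mul] at h4
    linarith
  -- the scalar inequality
  have hpnn : 0 ≤ p := setIntegral_nonneg hPmeas fun s _ => hh₀nn s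
  have hqnn : 0 ≤ q := setIntegral_nonneg hPmeas.compl fun s _ => hh₀nn s
  have hkey : 4 * A * B ≤ ε * (A + B) := by
    have h1 := aux_exp_key3 a b ha0 hb0
    have hab : Real.exp b - Real.exp a = A + B := by rw [hA, hB]; ring
    have hABnn : (0:ℝ) ≤ A + B := by linarith
    rw [hab] at h1
    calc 4 * A * B = 4 * (Real.exp b - 1) * (1 - Real.exp a) := by rw [hA, hB]
    _ ≤ (b - a) * (A + B) := h1
    _ ≤ ε * (A + B) := mul_le_mul_of_nonneg_right hbale hABnn
  exact aux_final_arith A B p q I ε hAnn hBnn hε0 hpq hIA hIB hkey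
end
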